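/- Let U : [0,∞) → ℝ be differentiable with U(0) = 0, with U(t) → 8π as t → +∞, and satisfying U'(t) + U(t)²/(16π) ≤ 4π for all t ≥ 0. If M ∈ ℝ satisfies limsup_{t→∞} e^t(8π − U(t)) ≤ 8πM, then M ≥ 2. -/

import Mathlib

open Set Filter Real

private lemma mono_aux' {f f' : ℝ → ℝ}
    (hf : ∀ t ∈ Set.Ici (0:ℝ), HasDerivWithinAt f (f' t) (Set.Ici 0) t)
    (h : ∀ t ∈ Set.Ici (0:ℝ), 0 ≤ f' t) : MonotoneOn f (Set.Ici 0) := by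
  apply monotoneOn_of_deriv_nonneg (convex_Ici 0)
  · exact fun t ht => (hf t ht).continuousWithinAt
  · intro t ht
    rw [interior_Ici] at ht
    exact ((hf t (mem_Ici.mpr (le_of_lt ht))).hasDerivAt
      (Ici_mem_nhds ht)).differentiableAt.differentiableWithinAt
  · intro t ht
    rw [interior_Ici] at ht
    rw [((hf t (mem_Ici.mpr (le_of_lt ht))).hasDerivAt (Ici_mem_nhds ht)).deriv]
    exact h t (mem_Ici.mpr (le_of_lt ht))

/-- Analytic skeleton of the mass–conformal capacity inequality `m_ADM ≥ 2𝔠(Ω)`: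
if `U` is differentiable on `[0,∞)` with `U(0) = 0`, `U(t) → 8π` at infinity,
`U' + U²/(16π) ≤ 4π` on `[0,∞)`, and
`limsup_{t→∞} e^t(8π − U(t)) ≤ 8πM`, then `M ≥ 2`. -/
theorem stmt_4 (U U' : ℝ → ℝ) (M : ℝ)
    (hderiv : ∀ t ∈ Set.Ici (0 : ℝ), HasDerivWithinAt U (U' t) (Set.Ici 0) t)
    (h0 : U 0 = 0)
    (hlim : Filter.Tendsto U Filter.atTop (nhds (8 * Real.pi)))
    (hineq : ∀ t ∈ Set.Ici (0 : ℝ), U' t + (U t) ^ 2 / (16 * Real.pi) ≤ 4 * Real.pi)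
    (hlimsup : Filter.limsup
      (fun t : ℝ => ((Real.exp t * (8 * Real.pi - U t) : ℝ) : EReal)) Filter.atTop
        ≤ ((8 * Real.pi * M : ℝ) : EReal)) :
    2 ≤ M := by
  have hπ : 0 < Real.pi := Real.pi_pos
  set g : ℝ → ℝ := fun t => Real.exp t * (8 * Real.pi - U t) with hgdef
  set g' : ℝ → ℝ := fun t => Real.exp t * (8 * Real.pi - U t) + Real.exp t * (0 - U' t)
    with hg'def
  have hg : ∀ t ∈ Set.Ici (0:ℝ), HasDerivWithinAt g (g' t) (Set.Ici 0) t := by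
    intro t ht
    exact (Real.hasDerivAt_exp t).hasDerivWithinAt.mul
      ((hasDerivWithinAt_const t (Set.Ici 0) (8 * Real.pi)).sub (hderiv t ht))
  -- key pointwise bound: g' t ≥ g t ^ 2 * exp (-t) / (16π)
  have hkey : ∀ t ∈ Set.Ici (0:ℝ), g t ^ 2 * Real.exp (-t) / (16 * Real.pi) ≤ g' t := by
    intro t ht
    have h1 : (8 * Real.pi - U t) ^ 2 / (16 * Real.pi) ≤ 8 * Real.pi - U t - U' t := by
      have hmul := mul_le_mul_of_nonneg_right (hineq t ht)
        (le_of_lt (by positivity : (0:ℝ) < 16 * Real.pi))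
      have hc : U t ^ 2 / (16 * Real.pi) * (16 * Real.pi) = U t ^ 2 :=
        div_mul_cancel₀ _ (by positivity)
      rw [div_le_iff₀ (by positivity)]
      nlinarith [hmul, hc]
    have hee : Real.exp t * Real.exp t * Real.exp (-t) = Real.exp t := by
      rw [← Real.exp_add, ← Real.exp_add]; ring_nf
    have h2 : g t ^ 2 * Real.exp (-t) = Real.exp t * (8 * Real.pi - U t) ^ 2 := by
      simp only [hgdef]; nlinarith [hee]
    have h3 : g' t = Real.exp t * (8 * Real.pi - U t - U' t) := by
      simp only [hg'def]; ring
    rw [h2, h3, div_le_iff₀ (by positivity)]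
    rw [div_le_iff₀ (by positivity)] at h1
    nlinarith [Real.exp_pos t]
  have hg'nn : ∀ t ∈ Set.Ici (0:ℝ), 0 ≤ g' t := by
    intro t ht
    have h1 : (0:ℝ) ≤ g t ^ 2 * Real.exp (-t) / (16 * Real.pi) := by positivity
    exact le_trans h1 (hkey t ht)
  have gmono : MonotoneOn g (Set.Ici 0) := mono_aux' hg hg'nn
  have g0 : g 0 = 8 * Real.pi := by simp [hgdef, h0]
  have glb : ∀ t ∈ Set.Ici (0:ℝ), 8 * Real.pi ≤ g t := by
    intro t ht
    calc 8 * Real.pi = g 0 := g0.symm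
    _ ≤ g t := gmono (mem_Ici.mpr (le_refl 0)) ht ht
  have gpos : ∀ t ∈ Set.Ici (0:ℝ), 0 < g t := fun t ht => lt_of_lt_of_le (by positivity) (glb t ht)
  -- ψ t = (1 + e^{-t})/(16π) - (g t)⁻¹ is monotone on [0,∞), ψ 0 = 0
  set ψ : ℝ → ℝ := fun t => (1 + Real.exp (-t)) / (16 * Real.pi) - (g t)⁻¹ with hψdef
  set ψ' : ℝ → ℝ := fun t => (0 + Real.exp (-t) * -1) / (16 * Real.pi) - (-(g' t) / g t ^ 2)
    with hψ'def
  have hψ : ∀ t ∈ Set.Ici (0:ℝ), HasDerivWithinAt ψ (ψ' t) (Set.Ici 0) t := by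
    intro t ht
    have hexp : HasDerivWithinAt (fun t : ℝ => Real.exp (-t)) (Real.exp (-t) * -1)
        (Set.Ici 0) t :=
      ((Real.hasDerivAt_exp (-t)).comp t (hasDerivAt_neg t)).hasDerivWithinAt
    exact (((hasDerivWithinAt_const t (Set.Ici 0) (1:ℝ)).add hexp).div_const
      (16 * Real.pi)).sub ((hg t ht).inv (gpos t ht).ne')
  have hψ'nn : ∀ t ∈ Set.Ici (0:ℝ), 0 ≤ ψ' t := by
    intro t ht
    have hk := hkey t ht
    have hg2 : (0:ℝ) < g t ^ 2 := pow_pos (gpos t ht) 2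
    have h1 : Real.exp (-t) / (16 * Real.pi) ≤ g' t / g t ^ 2 := by
      rw [div_le_div_iff₀ (by positivity : (0:ℝ) < 16 * Real.pi) hg2]
      calc Real.exp (-t) * g t ^ 2 = g t ^ 2 * Real.exp (-t) := by ring
      _ ≤ g' t * (16 * Real.pi) := by
          rw [← div_le_iff₀ (by positivity)]; exact hk
    have : ψ' t = g' t / g t ^ 2 - Real.exp (-t) / (16 * Real.pi) := by
      simp only [hψ'def]; ring
    rw [this]; linarith
  have ψmono : MonotoneOn ψ (Set.Ici 0) := mono_aux' hψ hψ'nn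
  have ψ0 : ψ 0 = 0 := by
    simp only [hψdef, g0, neg_zero, Real.exp_zero]
    field_simp
    ring
  -- lower bound on g
  have glow : ∀ t ∈ Set.Ici (0:ℝ), 16 * Real.pi / (1 + Real.exp (-t)) ≤ g t := by
    intro t ht
    have hψt : 0 ≤ ψ t := by
      rw [← ψ0]; exact ψmono (mem_Ici.mpr (le_refl 0)) ht ht
    have h2 : (g t)⁻¹ ≤ (1 + Real.exp (-t)) / (16 * Real.pi) := by
      simp only [hψdef] at hψt; linarith
    have hgp := gpos t ht
    rw [div_le_iff₀ (by positivity)]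
    have h2' : 1 ≤ g t * ((1 + Real.exp (-t)) / (16 * Real.pi)) :=
      calc 1 = g t * (g t)⁻¹ := (mul_inv_cancel₀ hgp.ne').symm
      _ ≤ _ := mul_le_mul_of_nonneg_left h2 hgp.le
    have h2'' : 1 ≤ g t * (1 + Real.exp (-t)) / (16 * Real.pi) := by
      rw [mul_div_assoc]; exact h2'
    linarith [(one_le_div (by positivity : (0:ℝ) < 16 * Real.pi)).mp h2'']
  -- pass to the limit
  have hbtend : Tendsto (fun t : ℝ => 16 * Real.pi / (1 + Real.exp (-t))) atTop
      (nhds (16 * Real.pi)) := by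
    have h1 : Tendsto (fun t : ℝ => Real.exp (-t)) atTop (nhds 0) :=
      Real.tendsto_exp_neg_atTop_nhds_zero
    have h2 : Tendsto (fun t : ℝ => 1 + Real.exp (-t)) atTop (nhds (1 + 0)) :=
      tendsto_const_nhds.add h1
    have h3 := Filter.Tendsto.div (tendsto_const_nhds (x := (16 * Real.pi : ℝ))) h2
      (by norm_num)
    simpa [Pi.div_def] using h3
  have hbE : Tendsto (fun t : ℝ => ((16 * Real.pi / (1 + Real.exp (-t)) : ℝ) : EReal)) atTop
      (nhds ((16 * Real.pi : ℝ) : EReal)) := by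
    exact (EReal.tendsto_coe).mpr hbtend
  have h16 : ((16 * Real.pi : ℝ) : EReal) ≤
      Filter.limsup (fun t : ℝ => ((Real.exp t * (8 * Real.pi - U t) : ℝ) : EReal)) atTop := by
    have hlie : Filter.limsup
        (fun t : ℝ => ((16 * Real.pi / (1 + Real.exp (-t)) : ℝ) : EReal)) atTop
        = ((16 * Real.pi : ℝ) : EReal) := hbE.limsup_eq
    calc ((16 * Real.pi : ℝ) : EReal)
        = Filter.limsup (fun t : ℝ => ((16 * Real.pi / (1 + Real.exp (-t)) : ℝ) : EReal)) atTop :=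
          hlie.symm
      _ ≤ Filter.limsup (fun t : ℝ => ((Real.exp t * (8 * Real.pi - U t) : ℝ) : EReal)) atTop := by
          apply Filter.limsup_le_limsup
          · filter_upwards [Filter.eventually_ge_atTop (0:ℝ)] with t ht
            exact EReal.coe_le_coe_iff.mpr (glow t ht)
          · exact ⟨⊥, fun a _ => bot_le⟩
          · exact ⟨⊤, Filter.Eventually.of_forall fun _ => le_top⟩
  have hfin : (16 * Real.pi : ℝ) ≤ 8 * Real.pi * M :=
    EReal.coe_le_coe_iff.mp (le_trans h16 hlimsup)
  nlinarith
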